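/- Let K be a differential field with real closed constant field C, K = R with trivial derivation, E = R⟨t⟩ with D(t) = t, and L = R⟨u⟩ with u² = t (so D(u) = u/2). Then the differential automorphism σ of ⟨E, C_U⟩ over ⟨K, C_U⟩ with σ(t) = −t does not extend to a differential automorphism of ⟨L, C_U⟩ over ⟨K, C_U⟩, where C_U is a real closed field of constants. -/

import Mathlib

/-- Let `U` be an ordered differential field (e.g. a model of CODF) with
real closed constant field `C_U`, containing a copy `R` of the reals with trivial derivation,
an element `t` with `D t = t`, and `u` with `u² = t` (so `D u = u/2`).  With `K = R`,
`E = R⟨t⟩` and `L = R⟨u⟩`, no differential automorphism of `⟨L, C_U⟩` over `⟨K, C_U⟩` can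
send `t` to `−t`; in particular the automorphism `σ` of `⟨E, C_U⟩` over `⟨K, C_U⟩` with
`σ t = −t` does not extend to `⟨L, C_U⟩`. -/
theorem stmt10 {U : Type*} [Field U] [LinearOrder U] [IsStrictOrderedRing U]
    (D : U → U)
    (hadd : ∀ a b : U, D (a + b) = D a + D b)
    (hleib : ∀ a b : U, D (a * b) = a * D b + D a * b)
    (R : Subfield U) (e : ℝ ≃+* ↥R)
    (hRD : ∀ x ∈ R, D x = 0)
    (t u : U) (hDt : D t = t) (hu : u ^ 2 = t) (hu0 : u ≠ 0)
    (hDu : D u = u / 2)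
    (CU : Subfield U) (hCU : ∀ x : U, x ∈ CU ↔ D x = 0)
    -- `C_U` is real closed:
    (hCUsq : ∀ c : ↥CU, 0 < (c : U) → ∃ d : ↥CU, d * d = c)
    (hCUodd : ∀ p : Polynomial (↥CU), Odd p.natDegree → ∃ z : ↥CU, p.eval z = 0)
    (LC KC : Subfield U)
    (hLC : LC = Subfield.closure (((R : Set U) ∪ {u}) ∪ (CU : Set U)))
    (hKC : KC = Subfield.closure ((R : Set U) ∪ (CU : Set U))) :
    ∀ τ : RingAut (↥LC),
      (∀ x y : ↥LC, D (x : U) = (y : U) → D (τ x : U) = (τ y : U)) →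
      (∀ x : ↥LC, (x : U) ∈ KC → τ x = x) →
      ∀ x : ↥LC, (x : U) = t → (τ x : U) ≠ -t := by
  intro τ _ _ x hx
  have huLC : u ∈ LC := by
    rw [hLC]
    exact Subfield.subset_closure (Or.inl (Or.inr rfl))
  set u' : ↥LC := ⟨u, huLC⟩ with hu'
  have hx2 : x = u' ^ 2 := by
    apply Subtype.ext
    push_cast [hx, hu']
    exact hu.symm
  have hτ : (τ x : U) = ((τ u' : U)) ^ 2 := by
    rw [hx2, map_pow]
    push_cast
    ring
  rw [hτ]
  have h1 : (0:U) ≤ (τ u' : U) ^ 2 := sq_nonneg _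
  have h2 : -t < 0 := by
    rw [← hu]
    simpa using pow_pos (by positivity : (0:U) < u ^ 2) 1 |>.trans_le le_rfl |> neg_neg_of_pos
  intro h
  rw [h] at h1
  linarith
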